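/- Fix integers $m \ge 2$ and $n_1, \dots, n_m \ge 2$. Set $\mathcal{N} = n_1 \cdots n_m$, $\mathcal{N}_i = \mathcal{N}/n_i$, and $s = \gcd(\mathcal{N}_1, \dots, \mathcal{N}_m)$. Let $L \le \mathbb{Z}^m$ be the subgroup generated by the elements $n_1 e_1 - n_i e_i$ for $i = 2, \dots, m$, where $e_1, \dots, e_m$ is the standard basis. Then the torsion subgroup of the quotient group $\mathbb{Z}^m / L$ is finite of cardinality $s$, and the quotient of $\mathbb{Z}^m/L$ by its torsion subgroup is isomorphic to $\mathbb{Z}$. -/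

import Mathlib

theorem exists_sum_eq_finset_gcd {ι : Type*} [DecidableEq ι] (f : ι → ℤ) (t : Finset ι) :
    ∃ c : ι → ℤ, ∑ i ∈ t, c i * f i = Finset.gcd t f := by
  classical
  induction t using Finset.induction with
  | empty => exact ⟨0, by simp⟩
  | @insert a t ha ih =>
    obtain ⟨c, hc⟩ := ih
    set A := Int.gcdA (f a) (Finset.gcd t f) with hA
    set B := Int.gcdB (f a) (Finset.gcd t f) with hB
    refine ⟨Function.update (fun i => c i * B) a A, ?_⟩
    rw [Finset.gcd_insert, ← Int.coe_gcd, Int.gcd_eq_gcd_ab (f a) (Finset.gcd t f),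
      Finset.sum_insert ha, Function.update_self]
    have : ∀ i ∈ t, Function.update (fun i => c i * B) a A i * f i = (c i * f i) * B := by
      intro i hi
      rw [Function.update_of_ne (by rintro rfl; exact ha hi)]
      ring
    rw [Finset.sum_congr rfl this, ← Finset.sum_mul, hc]
    ring

/-- Example 5.1(4) of Neumann–Wahl, "The End Curve Theorem for normal complex surface
singularities" (group-theoretic computation).  For integers `m ≥ 2` and
`n 0, …, n (m-1) ≥ 2`, set `N = ∏ n i`, `Ni i = N / n i`, and
`s = gcd (Ni 0, …, Ni (m-1))`.  Let `L ≤ ℤ^m` be the subgroup generated by the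
elements `n 0 • e 0 - n i • e i` for `i ≠ 0`.  Then the torsion subgroup of
`ℤ^m / L` is finite of cardinality `s`, and the quotient of `ℤ^m / L` by its
torsion subgroup is isomorphic to `ℤ`. -/
theorem torsion_of_quotient_card (m : ℕ) (hm : 2 ≤ m) (i0 : Fin m) (hi0 : (i0 : ℕ) = 0)
    (n : Fin m → ℤ) (hn : ∀ i, 2 ≤ n i)
    (N : ℤ) (hN : N = ∏ i, n i)
    (s : ℤ) (hs : s = Finset.gcd Finset.univ (fun i => N / n i))
    (L : AddSubgroup (Fin m → ℤ))
    (hL : L = AddSubgroup.closure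
      {v | ∃ i : Fin m, i ≠ i0 ∧ v = Pi.single i0 (n i0) - Pi.single i (n i)}) :
    Finite (AddCommGroup.torsion ((Fin m → ℤ) ⧸ L)) ∧
    (Nat.card (AddCommGroup.torsion ((Fin m → ℤ) ⧸ L)) : ℤ) = s ∧
    Nonempty ((((Fin m → ℤ) ⧸ L) ⧸ AddCommGroup.torsion ((Fin m → ℤ) ⧸ L)) ≃+ ℤ) := by
  classical
  set e0 : Fin m → ℤ := Pi.single i0 1 with he0
  set Ni : Fin m → ℤ := fun i => N / n i with hNidef
  set M : Fin m → ℤ := fun i => Ni i / s with hMdef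
  -- basic integer facts
  have hn0 : ∀ i, n i ≠ 0 := fun i => by have := hn i; omega
  have hNne : N ≠ 0 := by
    rw [hN]; exact Finset.prod_ne_zero_iff.mpr fun i _ => hn0 i
  have hdvd : ∀ i, n i ∣ N := fun i => hN ▸ Finset.dvd_prod_of_mem n (Finset.mem_univ i)
  have hnNi : ∀ i, n i * Ni i = N := fun i => Int.mul_ediv_cancel' (hdvd i)
  have hNine : ∀ i, Ni i ≠ 0 := fun i h => hNne (by rw [← hnNi i, h, mul_zero])
  have hsdvd : ∀ i, s ∣ Ni i := fun i => hs ▸ Finset.gcd_dvd (Finset.mem_univ i)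
  have hsM : ∀ i, s * M i = Ni i := fun i => Int.mul_ediv_cancel' (hsdvd i)
  have hsne : s ≠ 0 := fun h => hNine i0 (by rw [← hsM i0, h, zero_mul])
  have hs0 : 0 ≤ s := by
    rw [← abs_eq_self, Int.abs_eq_normalize, hs, Finset.normalize_gcd]
  have hMne : ∀ i, M i ≠ 0 := fun i h => hNine i (by rw [← hsM i, h, mul_zero])
  -- the homomorphism ψ
  set ψ : (Fin m → ℤ) →+ ℤ := AddMonoidHom.mk' (fun v => ∑ i, v i * M i) (by
    intro v w
    simp [add_mul, Finset.sum_add_distrib]) with hψdef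
  have hψapp : ∀ v, ψ v = ∑ i, v i * M i := fun v => rfl
  have hψs : ∀ (j : Fin m) (a : ℤ), ψ (Pi.single j a) = a * M j := by
    intro j a
    rw [hψapp]
    rw [Finset.sum_eq_single_of_mem j (Finset.mem_univ j)]
    · rw [Pi.single_eq_same]
    · intro i _ hij
      rw [Pi.single_eq_of_ne hij, zero_mul]
  have hnM : ∀ i, n i * M i = n i0 * M i0 := by
    intro i
    have : s * (n i * M i) = s * (n i0 * M i0) := by
      rw [mul_left_comm, hsM, mul_left_comm, hsM, hnNi, hnNi]
    exact mul_left_cancel₀ hsne this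
  have hgmem : ∀ i : Fin m, i ≠ i0 →
      (Pi.single i0 (n i0) - Pi.single i (n i)) ∈ L := by
    intro i hi
    rw [hL]
    exact AddSubgroup.subset_closure ⟨i, hi, rfl⟩
  have hψg : ∀ i : Fin m, ψ (Pi.single i0 (n i0) - Pi.single i (n i)) = 0 := by
    intro i
    rw [map_sub, hψs, hψs, hnM i, sub_self]
  have hLle : ∀ x ∈ L, ψ x = 0 := by
    intro x hx
    rw [hL] at hx
    refine AddSubgroup.closure_induction ?_ (map_zero ψ) ?_ ?_ hx
    · rintro v ⟨i, hi, rfl⟩; exact hψg i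
    · intro a b _ _ ha hb; rw [map_add, ha, hb, add_zero]
    · intro a _ ha; rw [map_neg, ha, neg_zero]
  -- the induced map on the quotient
  set G := (Fin m → ℤ) ⧸ L with hG
  set ψb : G →+ ℤ := QuotientAddGroup.lift L ψ hLle with hψbdef
  have hψbmk : ∀ v, ψb (QuotientAddGroup.mk' L v) = ψ v := fun v => rfl
  -- surjectivity
  have hψsurj : Function.Surjective ψ := by
    obtain ⟨c, hc⟩ := exists_sum_eq_finset_gcd (fun i => Ni i) Finset.univ
    have hc1 : ψ c = 1 := by
      apply mul_left_cancel₀ hsne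
      rw [mul_one, hψapp, Finset.mul_sum]
      have : ∀ i ∈ Finset.univ, s * (c i * M i) = c i * Ni i := by
        intro i _
        rw [mul_left_comm, hsM]
      rw [Finset.sum_congr rfl this, hc, ← hs]
    intro k
    refine ⟨k • c, ?_⟩
    rw [map_zsmul, hc1, smul_eq_mul, mul_one]
  have hψbsurj : Function.Surjective ψb := by
    intro k
    obtain ⟨v, hv⟩ := hψsurj k
    exact ⟨QuotientAddGroup.mk' L v, by rw [hψbmk, hv]⟩
  -- torsion = kernel of ψb
  have htor : AddCommGroup.torsion G = ψb.ker := by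
    ext x
    rw [AddMonoidHom.mem_ker, AddCommGroup.mem_torsion]
    constructor
    · intro hx
      obtain ⟨k, hk, hkx⟩ := isOfFinAddOrder_iff_nsmul_eq_zero.mp hx
      have h1 : (k : ℤ) * ψb x = 0 := by
        have h2 := congrArg ψb hkx
        rw [map_nsmul, map_zero] at h2
        rw [← h2, nsmul_eq_mul]
      rcases mul_eq_zero.mp h1 with h | h
      · exact absurd h (by exact_mod_cast hk.ne')
      · exact h
    · intro hx
      induction x using QuotientAddGroup.induction_on with
      | H v =>
      replace hx : ψ v = 0 := hx
      have hφv : ∑ i, v i * Ni i = 0 := by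
        have h3 : s * ψ v = ∑ i, v i * Ni i := by
          rw [hψapp, Finset.mul_sum]
          exact Finset.sum_congr rfl fun i _ => by rw [mul_left_comm, hsM]
        rw [hx, mul_zero] at h3
        exact h3.symm
      have hNv : N • v = ∑ i ∈ Finset.univ.erase i0,
          (-(v i * Ni i)) • (Pi.single i0 (n i0) - Pi.single i (n i)) := by
        funext j
        rw [Finset.sum_apply]
        simp only [Pi.smul_apply, Pi.sub_apply, smul_eq_mul]
        by_cases hj : j = i0
        · rw [hj]
          have hterm : ∀ i ∈ Finset.univ.erase i0,
              -(v i * Ni i) * ((Pi.single i0 (n i0) : Fin m → ℤ) i0 - (Pi.single i (n i) : Fin m → ℤ) i0)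
                = -(n i0) * (v i * Ni i) := by
            intro i hi
            rw [Pi.single_eq_same, Pi.single_eq_of_ne (Finset.ne_of_mem_erase hi).symm, sub_zero]
            ring
          rw [Finset.sum_congr rfl hterm, ← Finset.mul_sum]
          have hsum : v i0 * Ni i0 + ∑ i ∈ Finset.univ.erase i0, v i * Ni i = 0 := by
            have h6 : (fun i => v i * Ni i) i0 + ∑ i ∈ Finset.univ.erase i0, v i * Ni i = 0 := by
              rw [Finset.add_sum_erase Finset.univ (fun i => v i * Ni i) (Finset.mem_univ i0)]
              exact hφv
            simpa using h6
          have h5 : ∑ i ∈ Finset.univ.erase i0, v i * Ni i = -(v i0 * Ni i0) := by linarith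
          rw [h5]
          linear_combination (-(v i0)) * hnNi i0
        · have hjmem : j ∈ Finset.univ.erase i0 := Finset.mem_erase.mpr ⟨hj, Finset.mem_univ j⟩
          rw [Finset.sum_eq_single_of_mem j hjmem]
          · rw [Pi.single_eq_of_ne hj, Pi.single_eq_same, zero_sub]
            linear_combination (-(v j)) * hnNi j
          · intro i hi hij
            rw [Pi.single_eq_of_ne hj, Pi.single_eq_of_ne (Ne.symm hij), sub_zero, mul_zero]
      have hmem : N • v ∈ L := by
        rw [hNv]
        exact AddSubgroup.sum_mem _ fun i hi =>
          AddSubgroup.zsmul_mem _ (hgmem i (Finset.ne_of_mem_erase hi)) _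
      have hNx : (N : ℤ) • (v : (Fin m → ℤ) ⧸ L) = 0 := by
        rw [← QuotientAddGroup.mk_zsmul, QuotientAddGroup.eq_zero_iff]
        exact hmem
      rw [isOfFinAddOrder_iff_nsmul_eq_zero]
      refine ⟨N.natAbs, Int.natAbs_pos.mpr hNne, ?_⟩
      have hcast : (N.natAbs : ℕ) • (v : (Fin m → ℤ) ⧸ L)
          = ((N.natAbs : ℤ)) • (v : (Fin m → ℤ) ⧸ L) := (natCast_zsmul _ _).symm
      rcases Int.natAbs_eq N with h | h
      · show (N.natAbs : ℕ) • (v : (Fin m → ℤ) ⧸ L) = 0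
        rw [hcast, ← h, hNx]
      · show (N.natAbs : ℕ) • (v : (Fin m → ℤ) ⧸ L) = 0
        rw [hcast, ← neg_eq_iff_eq_neg.mpr h, neg_zsmul, hNx, neg_zero]
  -- subgroups K, E, F
  set K : AddSubgroup (Fin m → ℤ) := ψ.ker with hK
  set E : AddSubgroup (Fin m → ℤ) := L ⊔ AddSubgroup.zmultiples e0 with hE
  set F : AddSubgroup (Fin m → ℤ) := K ⊔ AddSubgroup.zmultiples e0 with hF
  have hLK : L ≤ K := fun x hx => hLle x hx
  have hKF : K ≤ F := le_sup_left
  have hLE : L ≤ E := le_sup_left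
  have hEF : E ≤ F := sup_le_sup_right hLK _
  have hsingle_smul : ∀ (j : Fin m) (a : ℤ), (Pi.single j a : Fin m → ℤ) = a • (Pi.single j (1:ℤ) : Fin m → ℤ) := by
    intro j a
    rw [← Pi.single_smul, smul_eq_mul, mul_one]
  have he0E : ∀ a : ℤ, Pi.single i0 a ∈ E := by
    intro a
    rw [hsingle_smul i0 a]
    exact AddSubgroup.mem_sup_right (AddSubgroup.zsmul_mem _ (AddSubgroup.mem_zmultiples e0) a)
  have hsingleE : ∀ i, i ≠ i0 → ∀ c : ℤ, Pi.single i (c * n i) ∈ E := by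
    intro i hi c
    have h1 : Pi.single i (n i) ∈ E := by
      have h2 : (Pi.single i (n i) : Fin m → ℤ)
          = Pi.single i0 (n i0) - (Pi.single i0 (n i0) - Pi.single i (n i)) :=
        (sub_sub_cancel (Pi.single i0 (n i0) : Fin m → ℤ) (Pi.single i (n i))).symm
      rw [h2]
      exact AddSubgroup.sub_mem _ (he0E _) (hLE (hgmem i hi))
    have h3 : (Pi.single i (c * n i) : Fin m → ℤ) = c • (Pi.single i (n i) : Fin m → ℤ) := by
      rw [← Pi.single_smul, smul_eq_mul]
    rw [h3]
    exact AddSubgroup.zsmul_mem _ h1 c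
  have hψe0 : ψ e0 = M i0 := by rw [he0, hψs, one_mul]
  -- K ∩ E = L
  have hKE : ∀ v, v ∈ K → v ∈ E → v ∈ L := by
    intro v hvK hvE
    obtain ⟨l, hl, z, hz, hlz⟩ := AddSubgroup.mem_sup.mp hvE
    obtain ⟨c, hc⟩ := AddSubgroup.mem_zmultiples_iff.mp hz
    have hψv : ψ v = 0 := hvK
    have hψl : ψ l = 0 := hLle l hl
    have hψz : ψ z = c * M i0 := by rw [← hc, map_zsmul, hψe0, smul_eq_mul]
    have hc0 : c * M i0 = 0 := by
      have := congrArg ψ hlz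
      rw [map_add, hψl, hψz, zero_add] at this
      rw [this, hψv]
    have : c = 0 := by
      rcases mul_eq_zero.mp hc0 with h | h
      · exact h
      · exact absurd h (hMne i0)
    rw [this, zero_smul] at hc
    rw [← hlz, ← hc, add_zero]
    exact hl
  -- the quotient by E
  have hNeZero : ∀ i : Fin m, (n i).natAbs ≠ 0 := fun i => Int.natAbs_ne_zero.mpr (hn0 i)
  set ρ : (Fin m → ℤ) →+ (∀ i : {i : Fin m // i ≠ i0}, ZMod ((n i.1).natAbs)) :=
    AddMonoidHom.mk' (fun v i => ((v i.1 : ℤ) : ZMod ((n i.1).natAbs))) (by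
      intro v w
      funext i
      simp only [Pi.add_apply, Int.cast_add]) with hρdef
  have hρapp : ∀ v (i : {i : Fin m // i ≠ i0}),
      ρ v i = ((v i.1 : ℤ) : ZMod ((n i.1).natAbs)) := fun v i => rfl
  have hρsurj : Function.Surjective ρ := by
    intro w
    refine ⟨fun i => if h : i = i0 then 0 else (((w ⟨i, h⟩).val : ℕ) : ℤ), ?_⟩
    funext i
    rw [hρapp]
    haveI : NeZero ((n i.1).natAbs) := ⟨hNeZero i.1⟩
    simp only [dif_neg i.2]
    push_cast
    exact ZMod.natCast_rightInverse (w i)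
  have hρker : ρ.ker = E := by
    ext v
    rw [AddMonoidHom.mem_ker]
    constructor
    · intro hv
      have hdv : ∀ i, i ≠ i0 → n i ∣ v i := by
        intro i hi
        have h1 := congrFun hv ⟨i, hi⟩
        rw [hρapp] at h1
        simp only [Pi.zero_apply] at h1
        rw [ZMod.intCast_zmod_eq_zero_iff_dvd] at h1
        exact Int.natAbs_dvd.mp h1
      have hv2 : v = ∑ j, Pi.single j (v j) := by
        funext i
        rw [Finset.sum_apply]
        exact (Fintype.sum_pi_single i fun j => v j).symm
      rw [hv2]
      refine AddSubgroup.sum_mem _ fun j _ => ?_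
      by_cases hj : j = i0
      · rw [hj]; exact he0E _
      · obtain ⟨c, hc⟩ := hdv j hj
        rw [hc, mul_comm]
        exact hsingleE j hj c
    · intro hv
      have hEker : E ≤ ρ.ker := by
        rw [hE]
        apply sup_le
        · rw [hL, AddSubgroup.closure_le]
          rintro w ⟨i, hi, rfl⟩
          have : ρ (Pi.single i0 (n i0) - Pi.single i (n i)) = 0 := by
            funext j
            rw [map_sub]
            have hji0 : (j : {i : Fin m // i ≠ i0}).1 ≠ i0 := j.2
            simp only [Pi.sub_apply, hρapp]
            rw [Pi.single_eq_of_ne hji0]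
            by_cases hji : j.1 = i
            · subst hji
              rw [Pi.single_eq_same]
              have hz : ((n (j:Fin m) : ℤ) : ZMod ((n (j:Fin m)).natAbs)) = 0 := by
                rw [ZMod.intCast_zmod_eq_zero_iff_dvd]
                exact Int.natAbs_dvd.mpr dvd_rfl
              rw [hz]
              simp
            · rw [Pi.single_eq_of_ne hji]
              simp
          exact this
        · intro z hz
          obtain ⟨c, hc⟩ := AddSubgroup.mem_zmultiples_iff.mp hz
          rw [AddMonoidHom.mem_ker, ← hc, map_zsmul]
          have : ρ e0 = 0 := by
            funext j
            rw [hρapp, he0, Pi.single_eq_of_ne j.2]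
            simp
          rw [this, smul_zero]
      exact hEker hv
  haveI hfinZMod : ∀ i : {i : Fin m // i ≠ i0}, Finite (ZMod ((n i.1).natAbs)) := by
    intro i
    haveI : NeZero ((n i.1).natAbs) := ⟨hNeZero i.1⟩
    infer_instance
  haveI hfinQ : Finite (∀ i : {i : Fin m // i ≠ i0}, ZMod ((n i.1).natAbs)) := by
    infer_instance
  have eE : ((Fin m → ℤ) ⧸ E) ≃+ (∀ i : {i : Fin m // i ≠ i0}, ZMod ((n i.1).natAbs)) :=
    (QuotientAddGroup.quotientAddEquivOfEq hρker.symm).trans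
      (QuotientAddGroup.quotientKerEquivOfSurjective ρ hρsurj)
  haveI hfinQE : Finite ((Fin m → ℤ) ⧸ E) := Finite.of_equiv _ eE.toEquiv.symm
  have hEindex : E.index = ∏ i ∈ Finset.univ.erase i0, (n i).natAbs := by
    rw [AddSubgroup.index_eq_card, Nat.card_congr eE.toEquiv, Nat.card_pi]
    rw [Finset.prod_subtype (p := fun i => i ≠ i0) (Finset.univ.erase i0)
      (fun x => by simp [Finset.mem_erase]) (fun i => (n i).natAbs)]
    exact Finset.prod_congr rfl fun i _ => by
      haveI : NeZero ((n i.1).natAbs) := ⟨hNeZero i.1⟩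
      rw [Nat.card_zmod]
  -- the quotient by F
  set τ : (Fin m → ℤ) →+ ZMod ((M i0).natAbs) :=
    (Int.castAddHom (ZMod ((M i0).natAbs))).comp ψ with hτdef
  have hτapp : ∀ v, τ v = ((ψ v : ℤ) : ZMod ((M i0).natAbs)) := fun v => rfl
  have hτsurj : Function.Surjective τ := by
    intro w
    obtain ⟨k, hk⟩ := ZMod.intCast_surjective w
    obtain ⟨v, hv⟩ := hψsurj k
    exact ⟨v, by rw [hτapp, hv, hk]⟩
  have hτker : τ.ker = F := by
    ext v
    rw [AddMonoidHom.mem_ker, hτapp, ZMod.intCast_zmod_eq_zero_iff_dvd]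
    rw [Int.natAbs_dvd]
    constructor
    · rintro ⟨c, hc⟩
      have h1 : v - c • e0 ∈ K := by
        rw [hK, AddMonoidHom.mem_ker, map_sub, map_zsmul, hψe0, smul_eq_mul, hc]
        ring
      have h2 : c • e0 ∈ AddSubgroup.zmultiples e0 :=
        AddSubgroup.zsmul_mem _ (AddSubgroup.mem_zmultiples e0) c
      have := AddSubgroup.add_mem F (hKF h1) (AddSubgroup.mem_sup_right h2)
      rwa [sub_add_cancel] at this
    · intro hv
      obtain ⟨k, hk, z, hz, hkz⟩ := AddSubgroup.mem_sup.mp hv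
      obtain ⟨c, hc⟩ := AddSubgroup.mem_zmultiples_iff.mp hz
      have hψk : ψ k = 0 := hk
      have : ψ v = c * M i0 := by
        rw [← hkz, map_add, hψk, zero_add, ← hc, map_zsmul, hψe0, smul_eq_mul]
      exact ⟨c, by rw [this, mul_comm]⟩
  have hFindex : F.index = (M i0).natAbs := by
    have eF : ((Fin m → ℤ) ⧸ F) ≃+ ZMod ((M i0).natAbs) :=
      (QuotientAddGroup.quotientAddEquivOfEq hτker.symm).trans
        (QuotientAddGroup.quotientKerEquivOfSurjective τ hτsurj)
    rw [AddSubgroup.index_eq_card, Nat.card_congr eF.toEquiv, Nat.card_zmod]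
  -- index arithmetic
  have hrel := AddSubgroup.relIndex_mul_index hEF
  have harith : ∏ i ∈ Finset.univ.erase i0, (n i).natAbs = s.natAbs * (M i0).natAbs := by
    have h1 : s.natAbs * (M i0).natAbs = (Ni i0).natAbs := by
      rw [← Int.natAbs_mul, hsM]
    have h2 : (n i0).natAbs * (Ni i0).natAbs = N.natAbs := by
      rw [← Int.natAbs_mul, hnNi]
    have h3 : N.natAbs = ∏ i, (n i).natAbs := by
      rw [hN]
      exact (map_prod Int.natAbsHom n Finset.univ)
    have h4 : (n i0).natAbs * ∏ i ∈ Finset.univ.erase i0, (n i).natAbs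
        = ∏ i, (n i).natAbs :=
      Finset.mul_prod_erase Finset.univ (fun i => (n i).natAbs) (Finset.mem_univ i0)
    apply Nat.eq_of_mul_eq_mul_left (Nat.pos_of_ne_zero (hNeZero i0))
    rw [h4, ← h3, ← h2, h1]
  have hMne0 : (M i0).natAbs ≠ 0 := Int.natAbs_ne_zero.mpr (hMne i0)
  have hrelval : E.relIndex F = s.natAbs := by
    apply Nat.eq_of_mul_eq_mul_right (Nat.pos_of_ne_zero hMne0)
    rw [hEindex, harith, hFindex] at hrel
    exact hrel
  -- identify torsion with F ⧸ E.addSubgroupOf F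
  set θ1 : K →+ ((Fin m → ℤ) ⧸ L) := (QuotientAddGroup.mk' L).comp K.subtype with hθ1def
  have hθ1ker : θ1.ker = L.addSubgroupOf K := by
    ext x
    rw [AddMonoidHom.mem_ker, AddSubgroup.mem_addSubgroupOf]
    show (QuotientAddGroup.mk' L) x.1 = 0 ↔ _
    rw [QuotientAddGroup.mk'_apply, QuotientAddGroup.eq_zero_iff]
  have hθ1range : θ1.range = ψb.ker := by
    ext x
    rw [AddMonoidHom.mem_range, AddMonoidHom.mem_ker]
    constructor
    · rintro ⟨v, rfl⟩
      show ψb ((QuotientAddGroup.mk' L) v.1) = 0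
      rw [hψbmk]
      exact v.2
    · intro hx
      induction x using QuotientAddGroup.induction_on with
      | H v =>
      have hv : v ∈ K := by
        rw [hK, AddMonoidHom.mem_ker]
        exact hx
      exact ⟨⟨v, hv⟩, rfl⟩
  set θ2 : K →+ (F ⧸ E.addSubgroupOf F) :=
    (QuotientAddGroup.mk' (E.addSubgroupOf F)).comp (AddSubgroup.inclusion hKF) with hθ2def
  have hθ2ker : θ2.ker = L.addSubgroupOf K := by
    ext x
    rw [AddMonoidHom.mem_ker, AddSubgroup.mem_addSubgroupOf]
    show (QuotientAddGroup.mk' _) (AddSubgroup.inclusion hKF x) = 0 ↔ _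
    rw [QuotientAddGroup.mk'_apply, QuotientAddGroup.eq_zero_iff, AddSubgroup.mem_addSubgroupOf]
    show (x : Fin m → ℤ) ∈ E ↔ (x : Fin m → ℤ) ∈ L
    exact ⟨fun h => hKE _ x.2 h, fun h => hLE h⟩
  have hθ2surj : Function.Surjective θ2 := by
    intro x
    induction x using QuotientAddGroup.induction_on with
    | H f =>
    obtain ⟨k, hk, z, hz, hkz⟩ := AddSubgroup.mem_sup.mp f.2
    refine ⟨⟨k, hk⟩, ?_⟩
    show (QuotientAddGroup.mk' _) (AddSubgroup.inclusion hKF ⟨k, hk⟩) = _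
    rw [QuotientAddGroup.mk'_apply, QuotientAddGroup.eq_iff_sub_mem,
      AddSubgroup.mem_addSubgroupOf]
    show (k : Fin m → ℤ) - f.1 ∈ E
    obtain ⟨c, hc⟩ := AddSubgroup.mem_zmultiples_iff.mp hz
    have : (k : Fin m → ℤ) - f.1 = -z := by rw [← hkz]; ring
    rw [this, ← hc]
    exact AddSubgroup.neg_mem _
      (AddSubgroup.mem_sup_right (AddSubgroup.zsmul_mem _ (AddSubgroup.mem_zmultiples e0) c))
  have eqFull : (AddCommGroup.torsion G) ≃+ (F ⧸ E.addSubgroupOf F) :=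
    (AddEquiv.addSubgroupCongr (htor.trans hθ1range.symm)).trans <|
      ((QuotientAddGroup.quotientKerEquivRange θ1).symm.trans
        ((QuotientAddGroup.quotientAddEquivOfEq (hθ1ker.trans hθ2ker.symm)).trans
          (QuotientAddGroup.quotientKerEquivOfSurjective θ2 hθ2surj)))
  set θ3 : F →+ ((Fin m → ℤ) ⧸ E) := (QuotientAddGroup.mk' E).comp F.subtype with hθ3def
  have hθ3ker : θ3.ker = E.addSubgroupOf F := by
    ext x
    rw [AddMonoidHom.mem_ker, AddSubgroup.mem_addSubgroupOf]
    show (QuotientAddGroup.mk' E) x.1 = 0 ↔ _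
    rw [QuotientAddGroup.mk'_apply, QuotientAddGroup.eq_zero_iff]
  haveI hfinrange : Finite θ3.range := Subtype.finite
  haveI hfinFE : Finite (F ⧸ E.addSubgroupOf F) := by
    have e3 : (F ⧸ E.addSubgroupOf F) ≃+ θ3.range :=
      (QuotientAddGroup.quotientAddEquivOfEq hθ3ker.symm).trans
        (QuotientAddGroup.quotientKerEquivRange θ3)
    exact Finite.of_equiv _ e3.toEquiv.symm
  have hcard : Nat.card (AddCommGroup.torsion G) = s.natAbs := by
    rw [Nat.card_congr eqFull.toEquiv]
    rw [← hrelval]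
    rfl
  refine ⟨?_, ?_, ?_⟩
  · exact Finite.of_equiv _ eqFull.toEquiv.symm
  · rw [hcard, Int.natAbs_of_nonneg hs0]
  · rw [htor]
    exact ⟨QuotientAddGroup.quotientKerEquivOfSurjective ψb hψbsurj⟩
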